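/- Let K ⊆ ℝ² be a compact convex set, and let w, p ∈ K with w ≠ p be such that the open line segment (w, p) lies in the interior of K. Let A_{wp} = {a ∈ ℝ² \ (int K ∪ {p}) : ‖a − p‖ ≤ ‖a − w‖}. Then the function a ↦ γ(w, p, a), restricted to A_{wp}, attains its minimum at a point lying in the intersection of the boundary ∂K with the perpendicular bisector of the segment [w, p]. -/

import Mathlib

noncomputable section

open EuclideanGeometry
open scoped RealInnerProductSpace

-- arccos is antitone
private lemma arccos_anti {x y : ℝ} (h : x ≤ y) : Real.arccos y ≤ Real.arccos x := by
  unfold Real.arccos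
  have := Real.monotone_arcsin h
  linarith

set_option maxHeartbeats 1000000

theorem stmt10 (K : Set (EuclideanSpace ℝ (Fin 2)))
    (hKcp : IsCompact K) (hKcv : Convex ℝ K)
    (w p : EuclideanSpace ℝ (Fin 2)) (hw : w ∈ K) (hp : p ∈ K) (hwp : w ≠ p)
    (hseg : openSegment ℝ w p ⊆ interior K) :
    ∃ a₀ ∈ {a : EuclideanSpace ℝ (Fin 2) |
        a ∉ interior K ∧ a ≠ p ∧ dist a p ≤ dist a w},
      a₀ ∈ frontier K ∧ dist a₀ w = dist a₀ p ∧
      ∀ a ∈ {a : EuclideanSpace ℝ (Fin 2) |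
          a ∉ interior K ∧ a ≠ p ∧ dist a p ≤ dist a w},
        ∠ w p a₀ ≤ ∠ w p a := by
  have hKcl : IsClosed K := hKcp.isClosed
  set u : EuclideanSpace ℝ (Fin 2) := w - p with hu_def
  have hu : u ≠ 0 := sub_ne_zero.mpr hwp
  set nu : ℝ := ‖u‖ with hnu_def
  have hnu : 0 < nu := norm_pos_iff.mpr hu
  -- key expansion
  have hexp : ∀ x : EuclideanSpace ℝ (Fin 2),
      ‖x - w‖ ^ 2 = ‖x - p‖ ^ 2 - 2 * ⟪u, x - p⟫ + nu ^ 2 := by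
    intro x
    have hx : x - w = (x - p) - u := by rw [hu_def]; abel
    rw [hx, @norm_sub_sq_real, real_inner_comm]
  -- characterization of the bisector
  have hLchar : ∀ x : EuclideanSpace ℝ (Fin 2),
      dist x w = dist x p ↔ ⟪u, x - p⟫ = nu ^ 2 / 2 := by
    intro x
    rw [dist_eq_norm, dist_eq_norm]
    constructor
    · intro h
      have h2 : ‖x - w‖ ^ 2 = ‖x - p‖ ^ 2 := by rw [h]
      have := hexp x
      linarith
    · intro h
      have h2 : ‖x - w‖ ^ 2 = ‖x - p‖ ^ 2 := by rw [hexp x, h]; ring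
      exact (sq_eq_sq₀ (norm_nonneg _) (norm_nonneg _)).mp h2
  -- angle formula
  have hang : ∀ x : EuclideanSpace ℝ (Fin 2),
      ∠ w p x = Real.arccos (⟪u, x - p⟫ / (nu * ‖x - p‖)) := by
    intro x
    rw [EuclideanGeometry.angle, InnerProductGeometry.angle]
    simp [vsub_eq_sub, hu_def, hnu_def]
  -- midpoint
  set m : EuclideanSpace ℝ (Fin 2) := midpoint ℝ w p with hm_def
  have hmp : m - p = (1 / 2 : ℝ) • u := by
    rw [hm_def, hu_def, midpoint_sub_right]
    norm_num
  have hm_int : m ∈ interior K := by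
    apply hseg
    have h1 : w ≠ m := by
      intro h
      have h2 : u = (1 / 2 : ℝ) • u := by rw [← hmp, ← h, hu_def]
      have h3 : ‖u‖ = 1 / 2 * ‖u‖ := by
        conv_lhs => rw [h2]
        rw [norm_smul]
        norm_num
      have h4 : (0:ℝ) < ‖u‖ := norm_pos_iff.mpr hu
      linarith
    have h2 : p ≠ m := by
      intro h
      have h2 : (0 : EuclideanSpace ℝ (Fin 2)) = (1 / 2 : ℝ) • u := by
        rw [← hmp, ← h, sub_self]
      have h3 : (0:ℝ) = 1 / 2 * ‖u‖ := by
        have h5 := congrArg norm h2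
        simpa [norm_smul] using h5
      have h4 : (0:ℝ) < ‖u‖ := norm_pos_iff.mpr hu
      linarith
    exact mem_openSegment_of_ne_left_right h1 h2 (midpoint_mem_segment w p)
  have hmL : ⟪u, m - p⟫ = nu ^ 2 / 2 := by
    rw [hmp, real_inner_smul_right, real_inner_self_eq_norm_sq]
    ring
  have hmnorm : ‖m - p‖ = nu / 2 := by
    have h12 : ‖(1 / 2 : ℝ)‖ = 1 / 2 := by norm_num
    rw [hmp, norm_smul, h12, hnu_def]
    ring
  -- points of bisector are ≠ p
  have hBnep : ∀ x : EuclideanSpace ℝ (Fin 2), ⟪u, x - p⟫ = nu ^ 2 / 2 → x ≠ p := by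
    intro x hx hxp
    rw [hxp] at hx
    simp at hx
    nlinarith
  -- comparison lemma
  have hcomp : ∀ b : EuclideanSpace ℝ (Fin 2), ⟪u, b - p⟫ = nu ^ 2 / 2 →
      ∀ a : EuclideanSpace ℝ (Fin 2), a ≠ p →
      ⟪u, a - p⟫ * (2 * ‖b - p‖) ≤ nu ^ 2 * ‖a - p‖ → ∠ w p b ≤ ∠ w p a := by
    intro b hb a hap hle
    have hbp : b ≠ p := hBnep b hb
    have hnb : 0 < ‖b - p‖ := by
      rw [norm_pos_iff]; exact sub_ne_zero.mpr hbp
    have hna : 0 < ‖a - p‖ := by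
      rw [norm_pos_iff]; exact sub_ne_zero.mpr hap
    rw [hang a, hang b]
    apply arccos_anti
    rw [div_le_div_iff₀ (by positivity) (by positivity), hb]
    nlinarith
  -- crossing lemma
  have hcross : ∀ y : EuclideanSpace ℝ (Fin 2), y ∉ interior K →
      ∃ b ∈ segment ℝ m y, b ∈ frontier K := by
    intro y hy
    by_cases hyK : y ∈ K
    · exact ⟨y, right_mem_segment _ _ _, by rw [hKcl.frontier_eq]; exact ⟨hyK, hy⟩⟩
    · by_contra hcon
      push_neg at hcon
      have hpc : IsPreconnected (segment ℝ m y) := (convex_segment m y).isPreconnected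
      have hsub : segment ℝ m y ⊆ interior K ∪ Kᶜ := by
        intro x hx
        by_cases hxK : x ∈ K
        · left
          by_contra hxi
          exact hcon x hx ⟨subset_closure hxK, hxi⟩
        · exact Or.inr hxK
      obtain ⟨x, _, hx1, hx2⟩ := hpc (interior K) Kᶜ isOpen_interior hKcl.isOpen_compl hsub
        ⟨m, left_mem_segment _ _ _, hm_int⟩ ⟨y, right_mem_segment _ _ _, hyK⟩
      exact hx2 (interior_subset hx1)
  -- segment on bisector
  have hsegL : ∀ y : EuclideanSpace ℝ (Fin 2), ⟪u, y - p⟫ = nu ^ 2 / 2 →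
      ∀ b ∈ segment ℝ m y, ⟪u, b - p⟫ = nu ^ 2 / 2 ∧ ‖b - p‖ ≤ max ‖m - p‖ ‖y - p‖ := by
    intro y hy b hb
    obtain ⟨α, β, hα, hβ, hαβ, rfl⟩ := hb
    have hbp : α • m + β • y - p = α • (m - p) + β • (y - p) := by
      have h2 : α • (m - p) + β • (y - p) = α • m + β • y - (α + β) • p := by module
      rw [h2, hαβ, one_smul]
    constructor
    · rw [hbp, inner_add_right, real_inner_smul_right, real_inner_smul_right, hmL, hy]
      linear_combination (nu ^ 2 / 2) * hαβ
    · rw [hbp]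
      calc ‖α • (m - p) + β • (y - p)‖ ≤ α * ‖m - p‖ + β * ‖y - p‖ := by
            refine (norm_add_le _ _).trans ?_
            rw [norm_smul, norm_smul, Real.norm_eq_abs, Real.norm_eq_abs,
              abs_of_nonneg hα, abs_of_nonneg hβ]
        _ ≤ α * max ‖m - p‖ ‖y - p‖ + β * max ‖m - p‖ ‖y - p‖ := by
            gcongr
            · exact le_max_left _ _
            · exact le_max_right _ _
        _ = max ‖m - p‖ ‖y - p‖ := by rw [← add_mul, hαβ, one_mul]
  -- B is nonempty: construct a far point on the bisector
  have hBne : ∃ b, b ∈ frontier K ∧ ⟪u, b - p⟫ = nu ^ 2 / 2 := by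
    set v : EuclideanSpace ℝ (Fin 2) := (EuclideanSpace.equiv (Fin 2) ℝ).symm ![-(u 1), u 0]
      with hv_def
    have hv0 : v 0 = -(u 1) := rfl
    have hv1 : v 1 = u 0 := rfl
    have huv : ⟪u, v⟫ = 0 := by
      rw [PiLp.inner_apply]
      simp [Fin.sum_univ_two, hv0, hv1]
      ring
    have hvne : v ≠ 0 := by
      intro h
      apply hu
      ext i
      have h0 : v 0 = 0 := by rw [h]; rfl
      have h1 : v 1 = 0 := by rw [h]; rfl
      rw [hv0] at h0
      rw [hv1] at h1
      fin_cases i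
      · simpa using h1
      · simpa using h0
    have hnv : 0 < ‖v‖ := norm_pos_iff.mpr hvne
    obtain ⟨R, hR⟩ := hKcp.isBounded.subset_closedBall p
    set s : ℝ := (|R| + nu + 1) / ‖v‖ with hs_def
    have hs : 0 < s := by positivity
    set y : EuclideanSpace ℝ (Fin 2) := m + s • v with hy_def
    have hyL : ⟪u, y - p⟫ = nu ^ 2 / 2 := by
      have : y - p = (m - p) + s • v := by rw [hy_def]; abel
      rw [this, inner_add_right, real_inner_smul_right, huv, hmL]
      ring
    have hyfar : ¬ y ∈ K := by
      intro hyK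
      have h1 : dist y p ≤ R := hR hyK
      have h2 : ‖s • v‖ ≤ ‖y - p‖ + ‖m - p‖ := by
        have : s • v = (y - p) - (m - p) := by rw [hy_def]; abel
        rw [this]
        exact norm_sub_le _ _
      rw [norm_smul, Real.norm_eq_abs, abs_of_pos hs] at h2
      have h3 : s * ‖v‖ = |R| + nu + 1 := by
        rw [hs_def]; field_simp
      rw [dist_eq_norm] at h1
      rw [hmnorm] at h2
      have : R ≤ |R| := le_abs_self R
      nlinarith
    obtain ⟨b, hbseg, hbfr⟩ := hcross y (fun h => hyfar (interior_subset h))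
    exact ⟨b, hbfr, (hsegL y hyL b hbseg).1⟩
  -- the compact set B
  set B : Set (EuclideanSpace ℝ (Fin 2)) :=
    frontier K ∩ {x | dist x w = dist x p} with hB_def
  have hBcp : IsCompact B := by
    apply IsCompact.of_isClosed_subset hKcp
    · exact isClosed_frontier.inter (isClosed_eq (continuous_id.dist continuous_const)
        (continuous_id.dist continuous_const))
    · intro x hx
      have := hx.1
      rw [hKcl.frontier_eq] at this
      exact this.1
  have hBnonempty : B.Nonempty := by
    obtain ⟨b, hb1, hb2⟩ := hBne
    exact ⟨b, hb1, (hLchar b).mpr hb2⟩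
  have hBcont : ContinuousOn (fun x => ∠ w p x) B := by
    intro x hx
    have hxp : x ≠ p := hBnep x ((hLchar x).mp hx.2)
    have : ContinuousAt (fun x => ∠ w p x) x := by
      have h1 : ContinuousAt (fun y : (EuclideanSpace ℝ (Fin 2)) × (EuclideanSpace ℝ (Fin 2)) ×
          (EuclideanSpace ℝ (Fin 2)) => ∠ y.1 y.2.1 y.2.2) (w, p, x) :=
        EuclideanGeometry.continuousAt_angle hwp hxp
      have hg : Continuous (fun z : EuclideanSpace ℝ (Fin 2) =>
          ((w, p, z) : (EuclideanSpace ℝ (Fin 2)) × (EuclideanSpace ℝ (Fin 2)) ×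
            (EuclideanSpace ℝ (Fin 2)))) := by fun_prop
      have h2 : ContinuousAt ((fun y : (EuclideanSpace ℝ (Fin 2)) × (EuclideanSpace ℝ (Fin 2)) ×
          (EuclideanSpace ℝ (Fin 2)) => ∠ y.1 y.2.1 y.2.2) ∘ (fun z => (w, p, z))) x :=
        ContinuousAt.comp h1 hg.continuousAt
      exact h2
    exact this.continuousWithinAt
  obtain ⟨a₀, ha₀B, ha₀min⟩ := hBcp.exists_isMinOn hBnonempty hBcont
  have ha₀L : ⟪u, a₀ - p⟫ = nu ^ 2 / 2 := (hLchar a₀).mp ha₀B.2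
  have ha₀nint : a₀ ∉ interior K := by
    have := ha₀B.1
    rw [hKcl.frontier_eq] at this
    exact this.2
  have ha₀p : a₀ ≠ p := hBnep a₀ ha₀L
  refine ⟨a₀, ⟨ha₀nint, ha₀p, le_of_eq ha₀B.2.symm⟩, ha₀B.1, ha₀B.2, ?_⟩
  rintro a ⟨hanint, hanp, hadist⟩
  have hna : 0 < ‖a - p‖ := by rw [norm_pos_iff]; exact sub_ne_zero.mpr hanp
  set c : ℝ := ⟪u, a - p⟫ with hc_def
  -- from dist a p ≤ dist a w : 2c ≤ nu^2
  have h2c : 2 * c ≤ nu ^ 2 := by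
    rw [dist_eq_norm, dist_eq_norm] at hadist
    have h2 : ‖a - p‖ ^ 2 ≤ ‖a - w‖ ^ 2 := by
      have := norm_nonneg (a - p)
      nlinarith
    have := hexp a
    rw [← hc_def] at this
    nlinarith
  by_cases hc : c ≤ 0
  · -- use a₀ itself
    apply hcomp a₀ ha₀L a hanp
    have h1 : 0 ≤ ‖a₀ - p‖ := norm_nonneg _
    nlinarith
  · push_neg at hc
    set t : ℝ := nu ^ 2 / (2 * c) with ht_def
    have ht1 : 1 ≤ t := by
      rw [ht_def, le_div_iff₀ (by linarith)]
      linarith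
    have ht0 : 0 < t := by linarith
    set ℓ : EuclideanSpace ℝ (Fin 2) := p + t • (a - p) with hℓ_def
    have hℓp : ℓ - p = t • (a - p) := by rw [hℓ_def]; abel
    have hℓL : ⟪u, ℓ - p⟫ = nu ^ 2 / 2 := by
      rw [hℓp, real_inner_smul_right, ← hc_def, ht_def]
      field_simp
    have hℓnint : ℓ ∉ interior K := by
      intro hℓint
      rcases eq_or_lt_of_le ht1 with heq | hlt
      · apply hanint
        have : ℓ = a := by rw [hℓ_def, ← heq, one_smul]; abel
        rwa [this] at hℓint
      · apply hanint
        apply hKcv.openSegment_closure_interior_subset_interior (subset_closure hp) hℓint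
        have hne : t ≠ 0 := ne_of_gt ht0
        have hkey : (1/t) • (ℓ - p) = a - p := by
          rw [hℓp, smul_smul, one_div_mul_cancel hne, one_smul]
        refine ⟨1 - 1/t, 1/t, ?_, by positivity, by ring, ?_⟩
        · simp only [sub_pos]
          rw [div_lt_one ht0]
          exact hlt
        · have hsplit : (1 - 1/t) • p + (1/t) • ℓ = p + (1/t) • (ℓ - p) := by
            rw [smul_sub]
            module
          rw [hsplit, hkey]
          abel
    obtain ⟨b, hbseg, hbfr⟩ := hcross ℓ hℓnint
    obtain ⟨hbL, hbnorm⟩ := hsegL ℓ hℓL b hbseg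
    have hℓnorm : ‖ℓ - p‖ = t * ‖a - p‖ := by
      rw [hℓp, norm_smul, Real.norm_eq_abs, abs_of_pos ht0]
    have hmle : ‖m - p‖ ≤ ‖ℓ - p‖ := by
      have hCS : ⟪u, ℓ - p⟫ ≤ nu * ‖ℓ - p‖ := real_inner_le_norm u (ℓ - p)
      rw [hℓL] at hCS
      rw [hmnorm]
      nlinarith
    have hble : ‖b - p‖ ≤ ‖ℓ - p‖ := by
      rw [max_eq_right hmle] at hbnorm
      exact hbnorm
    have hstep1 : ∠ w p a₀ ≤ ∠ w p b := ha₀min ⟨hbfr, (hLchar b).mpr hbL⟩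
    have hstep2 : ∠ w p b ≤ ∠ w p a := by
      apply hcomp b hbL a hanp
      rw [← hc_def]
      have h1 : c * (2 * ‖b - p‖) ≤ c * (2 * ‖ℓ - p‖) := by nlinarith
      have h2 : c * (2 * ‖ℓ - p‖) = nu ^ 2 * ‖a - p‖ := by
        rw [hℓnorm, ht_def]
        field_simp
      linarith
    linarith
end
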